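/- For odd positive integers n and k and any r with 1 ≤ r, the graph k·Cₙʳ (disjoint union of k copies of the r-th power of the n-cycle) is edge graceful, assuming Cₙʳ is striaeform edge graceful. -/

import Mathlib

/-- A finite multigraph (no loops): each edge has an unordered pair of distinct ends. -/
structure Multigraph (V E : Type) [Fintype V] [DecidableEq V] [Fintype E] where
  ends : E → Sym2 V
  loopless : ∀ e, ¬ (ends e).IsDiag

variable {V E : Type} [Fintype V] [DecidableEq V] [Fintype E]

/-- The edges incident with a vertex. -/
def Multigraph.incident (G : Multigraph V E) (v : V) : Finset E :=
  Finset.univ.filter (fun e => v ∈ G.ends e)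

/-- The degree of a vertex (no loops, so each incident edge counts once). -/
def Multigraph.degree (G : Multigraph V E) (v : V) : ℕ := (G.incident v).card

/-- Edge gracefulness: the edges can be labeled bijectively by `1, …, q` so that the
vertex labels induced by summing labels of incident edges modulo `p` are distinct. -/
def Multigraph.EdgeGraceful (G : Multigraph V E) : Prop :=
  ∃ ℓ : E ≃ Fin (Fintype.card E),
    Function.Injective (fun v : V =>
      ∑ e ∈ G.incident v, (((ℓ e).val + 1 : ℕ) : ZMod (Fintype.card V)))

/-- The disjoint union of `k` copies of `G`. -/
def Multigraph.copies (G : Multigraph V E) (k : ℕ) : Multigraph (V × Fin k) (E × Fin k) where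
  ends e := (G.ends e.1).map (fun v => (v, e.2))
  loopless e h := G.loopless e.1 (by
    have : Function.Injective (fun v : V => (v, e.2)) := fun a b hab => congrArg Prod.fst hab
    rwa [Sym2.isDiag_map this] at h)

variable [DecidableEq E]

/-- `G` is striaeform: it has a 2-factorization `S₁, …, S_r` (every vertex is incident
with exactly 2 edges of each factor) and an edge graceful labeling such that the labels
of the `p` edges of each `Sⱼ`, reduced modulo `p`, are exactly `{1, 2, …, p}`
(i.e. all residues modulo `p`). -/
def Multigraph.Striaeform [Nonempty V] (G : Multigraph V E) (r : ℕ) : Prop :=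
  haveI : NeZero (Fintype.card V) := ⟨Fintype.card_ne_zero⟩
  ∃ (f : E → Fin r) (ℓ : E ≃ Fin (Fintype.card E)),
    (∀ (v : V) (j : Fin r),
        (Finset.univ.filter (fun e => f e = j ∧ v ∈ G.ends e)).card = 2) ∧
    Function.Injective (fun v : V =>
      ∑ e ∈ G.incident v, (((ℓ e).val + 1 : ℕ) : ZMod (Fintype.card V))) ∧
    (∀ j : Fin r,
      Finset.image (fun e => (((ℓ e).val + 1 : ℕ) : ZMod (Fintype.card V)))
        (Finset.univ.filter (fun e => f e = j)) = Finset.univ)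


/-- The `r`-th power `Cₙʳ` of the `n`-cycle, as a multigraph on `ZMod n`: for each
vertex `v` and each `d` with `1 ≤ d ≤ r` there is an edge `{v, v + d}` (each edge of
`Cₙʳ` arises exactly once this way when `2r < n`). -/
def cyclePower (n r : ℕ) [NeZero n] (h : 2 * r < n) :
    Multigraph (ZMod n) (ZMod n × Fin r) where
  ends e := s(e.1, e.1 + ((e.2.val + 1 : ℕ) : ZMod n))
  loopless e hd := by
    have h1 : e.2.val + 1 < n := by omega
    have : ((e.2.val + 1 : ℕ) : ZMod n) ≠ 0 := by
      intro h0
      have := (ZMod.natCast_eq_zero_iff _ n).mp h0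
      have := Nat.le_of_dvd (Nat.succ_pos _) this
      omega
    simp only [Sym2.isDiag_iff_proj_eq] at hd
    exact this (left_eq_add.mp hd)


section Aux

lemma incident_copies' {V E : Type} [Fintype V] [DecidableEq V] [Fintype E] [DecidableEq E]
    (G : Multigraph V E) (k : ℕ) (v : V) (t : Fin k) :
    (G.copies k).incident (v, t) = (G.incident v).image (fun e => (e, t)) := by
  ext ⟨e, s⟩
  simp only [Multigraph.incident, Multigraph.copies, Finset.mem_filter, Finset.mem_univ,
    true_and, Finset.mem_image, Sym2.mem_map, Prod.mk.injEq]
  constructor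
  · rintro ⟨w, hw, rfl, rfl⟩
    exact ⟨e, hw, rfl, rfl⟩
  · rintro ⟨e', hw, rfl, rfl⟩
    exact ⟨v, hw, rfl, rfl⟩

lemma sum_fiber_two' {V E : Type} [Fintype V] [DecidableEq V] [Fintype E] [DecidableEq E]
    (G : Multigraph V E) {r : ℕ} (f : E → Fin r) (v : V)
    (h2 : ∀ j : Fin r, (Finset.univ.filter (fun e => f e = j ∧ v ∈ G.ends e)).card = 2)
    (F : Fin r → ℕ) :
    ∑ e ∈ G.incident v, F (f e) = ∑ j : Fin r, 2 * F j := by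
  rw [← Finset.sum_fiberwise' (G.incident v) f F]
  refine Finset.sum_congr rfl fun j _ => ?_
  have hcard : ((G.incident v).filter (fun e => f e = j)).card = 2 := by
    rw [← h2 j]
    congr 1
    ext e
    simp only [Multigraph.incident, Finset.filter_filter, Finset.mem_filter, Finset.mem_univ,
      true_and]
    tauto
  rw [Finset.sum_const, hcard, smul_eq_mul]

end Aux

/-- Corollary 6 (first half): for odd `n`, `k` and `1 ≤ r` (with `2r < n`, so that
`Cₙʳ` is `2r`-regular), if `Cₙʳ` is striaeform then `kCₙʳ` is edge graceful. -/
theorem stmt_13 (n k r : ℕ) (hn : 0 < n) (hk : 0 < k) (hr : 1 ≤ r)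
    (hrn : 2 * r < n) (hnodd : Odd n) (hkodd : Odd k)
    (hne : NeZero n := ⟨hn.ne'⟩)
    (hstr : (cyclePower n r hrn).Striaeform r) :
    ((cyclePower n r hrn).copies k).EdgeGraceful := by
  classical
  haveI := hne
  haveI : NeZero k := ⟨hk.ne'⟩
  obtain ⟨f, ℓ, h2fac, hinj, hres⟩ := hstr
  have hp : Fintype.card (ZMod n) = n := ZMod.card n
  have hN : Fintype.card (ZMod n × Fin k) = n * k := by
    simp [Fintype.card_prod, hp]
  have hQ : Fintype.card ((ZMod n × Fin r) × Fin k) = n * r * k := by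
    simp [Fintype.card_prod, hp]
  have h2u : IsUnit (2 : ZMod k) := by
    have h2c : ((2 : ℕ) : ZMod k) = (2 : ZMod k) := by norm_cast
    rw [← h2c]
    exact (ZMod.isUnit_iff_coprime 2 k).mpr (Nat.coprime_two_left.mpr hkodd)
  -- the coefficients of the permutations used on each 2-factor
  set c : ℕ → ZMod k := fun j => if j = 0 then (if Even r then 2 else 1) else (-1) ^ j with hc
  have hcunit : ∀ j, IsUnit (c j) := by
    intro j
    simp only [hc]
    split
    · split
      · exact h2u
      · exact isUnit_one
    · exact isUnit_one.neg.pow j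
  have hcsum : ∑ j ∈ Finset.range r, c j = 1 := by
    have hform : ∀ j, c j = (-1 : ZMod k) ^ j +
        (if j = 0 then (if Even r then 1 else 0) else 0) := by
      intro j
      simp only [hc]
      rcases eq_or_ne j 0 with rfl | hj
      · rcases Nat.even_or_odd r with h | h
        · simp only [if_pos rfl, pow_zero, if_pos h]
          norm_num
        · simp only [if_pos rfl, pow_zero, if_neg (Nat.not_even_iff_odd.mpr h)]
          norm_num
      · simp [hj]
    calc ∑ j ∈ Finset.range r, c j
        = (∑ j ∈ Finset.range r, (-1 : ZMod k) ^ j)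
          + ∑ j ∈ Finset.range r, (if j = 0 then (if Even r then 1 else 0) else 0) := by
          rw [← Finset.sum_add_distrib]
          exact Finset.sum_congr rfl fun j _ => hform j
      _ = 1 := by
          rw [neg_one_geom_sum, Finset.sum_ite_eq' (Finset.range r) 0
            (fun _ => if Even r then (1 : ZMod k) else 0)]
          have h0 : (0 : ℕ) ∈ Finset.range r := Finset.mem_range.mpr (by omega)
          rw [if_pos h0]
          rcases Nat.even_or_odd r with hre | hro
          · simp [hre]
          · simp [Nat.not_even_iff_odd.mpr hro]
  set π : Fin r → Fin k → ℕ := fun j t => (c j.val * (t.val : ZMod k)).val with hπ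
  -- the residue of the sum of a row of π values
  have hB : ∀ t : Fin k, ((∑ j : Fin r, π j t : ℕ) : ZMod k) = (t.val : ZMod k) := by
    intro t
    rw [Nat.cast_sum]
    have hterm : ∀ j : Fin r, ((π j t : ℕ) : ZMod k) = c j.val * (t.val : ZMod k) :=
      fun j => ZMod.natCast_rightInverse _
    rw [Finset.sum_congr rfl (fun j _ => hterm j), ← Finset.sum_mul,
      Fin.sum_univ_eq_sum_range (fun m => c m) r, hcsum, one_mul]
  -- the new label of edge e in copy t
  have hLlt : ∀ (e : ZMod n × Fin r) (t : Fin k),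
      (ℓ e).val % n + n * (k * (f e).val + π (f e) t) <
        Fintype.card ((ZMod n × Fin r) × Fin k) := by
    intro e t
    rw [hQ]
    have h1 : (ℓ e).val % n < n := Nat.mod_lt _ hn
    have h3 : π (f e) t < k := ZMod.val_lt _
    have h4 : k * (f e).val + π (f e) t + 1 ≤ k * r := by
      have h41 : k * (f e).val + π (f e) t + 1 ≤ k * ((f e).val + 1) := by
        rw [Nat.mul_succ]; omega
      exact h41.trans (Nat.mul_le_mul_left k (f e).isLt)
    have h5 : n * (k * (f e).val + π (f e) t + 1) ≤ n * (k * r) :=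
      Nat.mul_le_mul_left n h4
    have h6 : n * (k * (f e).val + π (f e) t + 1)
        = n * (k * (f e).val + π (f e) t) + n := Nat.mul_succ n _
    have h7 : n * (k * r) = n * r * k := by ring
    linarith
  set L : ((ZMod n × Fin r) × Fin k) → Fin (Fintype.card ((ZMod n × Fin r) × Fin k)) :=
    fun et => ⟨(ℓ et.1).val % n + n * (k * (f et.1).val + π (f et.1) et.2),
      hLlt et.1 et.2⟩ with hLdef
  have hLsurj : Function.Surjective L := by
    intro m
    have hm : m.val < n * (r * k) := by
      have h := lt_of_lt_of_le m.isLt (le_of_eq hQ)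
      rw [mul_assoc] at h
      exact h
    have hb : m.val / n < r * k := Nat.div_lt_of_lt_mul hm
    have hjlt : m.val / n / k < r := Nat.div_lt_of_lt_mul (by rw [mul_comm] at hb; exact hb)
    set j : Fin r := ⟨m.val / n / k, hjlt⟩ with hj
    obtain ⟨u, hu⟩ := hcunit j.val
    set t : Fin k := ⟨(((u⁻¹ : (ZMod k)ˣ) : ZMod k) * ((m.val / n % k : ℕ) : ZMod k)).val,
      ZMod.val_lt _⟩ with ht
    have hmem : (((m.val % n + 1 : ℕ)) : ZMod (Fintype.card (ZMod n))) ∈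
        Finset.image (fun e => (((ℓ e).val + 1 : ℕ) : ZMod (Fintype.card (ZMod n))))
          (Finset.univ.filter (fun e => f e = j)) := by
      rw [hres j]; exact Finset.mem_univ _
    obtain ⟨e, he, hee⟩ := Finset.mem_image.mp hmem
    have hef : f e = j := (Finset.mem_filter.mp he).2
    have hmod : (ℓ e).val % n = m.val % n := by
      have h1 := (ZMod.natCast_eq_natCast_iff _ _ _).mp hee
      rw [hp] at h1
      have h2 : (ℓ e).val ≡ m.val % n [MOD n] := Nat.ModEq.add_right_cancel' 1 h1
      have h3 : (ℓ e).val % n = (m.val % n) % n := h2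
      rw [Nat.mod_mod_of_dvd _ (dvd_refl n)] at h3
      exact h3
    have hπt : π (f e) t = m.val / n % k := by
      rw [hef]
      show (c j.val * ((t.val : ℕ) : ZMod k)).val = m.val / n % k
      have h1 : ((t.val : ℕ) : ZMod k)
          = ((u⁻¹ : (ZMod k)ˣ) : ZMod k) * ((m.val / n % k : ℕ) : ZMod k) :=
        ZMod.natCast_rightInverse _
      rw [h1, ← mul_assoc, ← hu, ← Units.val_mul, mul_inv_cancel, Units.val_one, one_mul]
      exact ZMod.val_cast_of_lt (Nat.mod_lt _ hk)
    refine ⟨(e, t), Fin.ext ?_⟩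
    show (ℓ e).val % n + n * (k * (f e).val + π (f e) t) = m.val
    rw [hπt, hmod, hef]
    show m.val % n + n * (k * (m.val / n / k) + m.val / n % k) = m.val
    rw [Nat.div_add_mod (m.val / n) k]
    exact Nat.mod_add_div m.val n
  have hLbij : Function.Bijective L :=
    (Fintype.bijective_iff_surjective_and_card L).mpr ⟨hLsurj, by simp⟩
  refine ⟨Equiv.ofBijective L hLbij, ?_⟩
  have hsplit : ∀ t : Fin k, (∑ j : Fin r, 2 * (k * j.val + π j t))
      = 2 * (k * ∑ j : Fin r, j.val) + 2 * ∑ j : Fin r, π j t := by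
    intro t
    simp only [Finset.mul_sum, ← Finset.sum_add_distrib]
    exact Finset.sum_congr rfl fun j _ => by ring
  have key : ∀ (v : ZMod n) (t : Fin k),
      (∑ e ∈ ((cyclePower n r hrn).copies k).incident (v, t),
        ((((Equiv.ofBijective L hLbij) e).val + 1 : ℕ) : ZMod (Fintype.card (ZMod n × Fin k))))
      = (((∑ e ∈ (cyclePower n r hrn).incident v, ((ℓ e).val % n + 1)) + n * (2 * (k * ∑ j : Fin r, j.val) + 2 * ∑ j : Fin r, π j t) : ℕ) : ZMod (Fintype.card (ZMod n × Fin k))) := by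
    intro v t
    rw [incident_copies', Finset.sum_image (by intro a _ b _ h; exact (Prod.ext_iff.mp h).1)]
    have step : ∀ e ∈ (cyclePower n r hrn).incident v,
        ((((Equiv.ofBijective L hLbij) (e, t)).val + 1 : ℕ)
            : ZMod (Fintype.card (ZMod n × Fin k)))
          = ((((ℓ e).val % n + 1) + n * (k * (f e).val + π (f e) t) : ℕ)
            : ZMod (Fintype.card (ZMod n × Fin k))) := by
      intro e _
      congr 1
      show ((ℓ e).val % n + n * (k * (f e).val + π (f e) t)) + 1 = _
      ring
    rw [Finset.sum_congr rfl step, ← Nat.cast_sum]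
    congr 1
    have h1 : ∑ e ∈ (cyclePower n r hrn).incident v, (k * (f e).val + π (f e) t)
        = 2 * (k * ∑ j : Fin r, j.val) + 2 * ∑ j : Fin r, π j t := by
      rw [sum_fiber_two' _ f v (h2fac v) (fun j => k * j.val + π j t)]
      exact hsplit t
    calc ∑ e ∈ (cyclePower n r hrn).incident v,
          (((ℓ e).val % n + 1) + n * (k * (f e).val + π (f e) t))
        = (∑ e ∈ (cyclePower n r hrn).incident v, ((ℓ e).val % n + 1))
          + n * ∑ e ∈ (cyclePower n r hrn).incident v, (k * (f e).val + π (f e) t) := by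
          rw [Finset.sum_add_distrib, ← Finset.mul_sum]
      _ = (∑ e ∈ (cyclePower n r hrn).incident v, ((ℓ e).val % n + 1))
          + n * (2 * (k * ∑ j : Fin r, j.val) + 2 * ∑ j : Fin r, π j t) := by rw [h1]
  intro a b hab
  obtain ⟨v, t⟩ := a
  obtain ⟨w, s⟩ := b
  have hab' : (∑ e ∈ ((cyclePower n r hrn).copies k).incident (v, t),
        ((((Equiv.ofBijective L hLbij) e).val + 1 : ℕ) : ZMod (Fintype.card (ZMod n × Fin k))))
      = ∑ e ∈ ((cyclePower n r hrn).copies k).incident (w, s),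
        ((((Equiv.ofBijective L hLbij) e).val + 1 : ℕ)
          : ZMod (Fintype.card (ZMod n × Fin k))) := hab
  rw [key v t, key w s] at hab'
  have hmodN := (ZMod.natCast_eq_natCast_iff _ _ _).mp hab'
  rw [hN] at hmodN
  -- first, the two vertices agree
  have hAcast : ∀ u : ZMod n,
      (∑ e ∈ (cyclePower n r hrn).incident u,
        (((ℓ e).val + 1 : ℕ) : ZMod (Fintype.card (ZMod n))))
      = (((∑ e ∈ (cyclePower n r hrn).incident u, ((ℓ e).val % n + 1)) : ℕ) : ZMod (Fintype.card (ZMod n))) := by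
    intro u
    rw [Nat.cast_sum]
    refine Finset.sum_congr rfl fun e _ => ?_
    apply (ZMod.natCast_eq_natCast_iff _ _ _).mpr
    rw [hp]
    exact ((Nat.mod_modEq (ℓ e).val n).symm.add_right 1).symm.symm
  have hvw : v = w := by
    apply hinj
    have h3 : ((∑ e ∈ (cyclePower n r hrn).incident v, ((ℓ e).val % n + 1)) + n * (2 * (k * ∑ j : Fin r, j.val) + 2 * ∑ j : Fin r, π j t))
        ≡ ((∑ e ∈ (cyclePower n r hrn).incident w, ((ℓ e).val % n + 1)) + n * (2 * (k * ∑ j : Fin r, j.val) + 2 * ∑ j : Fin r, π j s)) [MOD n] :=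
      Nat.ModEq.of_dvd ⟨k, rfl⟩ hmodN
    have h4 : (∑ e ∈ (cyclePower n r hrn).incident v, ((ℓ e).val % n + 1)) ≡ (∑ e ∈ (cyclePower n r hrn).incident w, ((ℓ e).val % n + 1)) [MOD n] := by
      have e1 : ((∑ e ∈ (cyclePower n r hrn).incident v, ((ℓ e).val % n + 1)) + n * (2 * (k * ∑ j : Fin r, j.val) + 2 * ∑ j : Fin r, π j t)) % n = (∑ e ∈ (cyclePower n r hrn).incident v, ((ℓ e).val % n + 1)) % n :=
        Nat.add_mul_mod_self_left _ n _
      have e2 : ((∑ e ∈ (cyclePower n r hrn).incident w, ((ℓ e).val % n + 1)) + n * (2 * (k * ∑ j : Fin r, j.val) + 2 * ∑ j : Fin r, π j s)) % n = (∑ e ∈ (cyclePower n r hrn).incident w, ((ℓ e).val % n + 1)) % n :=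
        Nat.add_mul_mod_self_left _ n _
      have := h3
      unfold Nat.ModEq at this ⊢
      rw [e1, e2] at this
      exact this
    have h5 : (((∑ e ∈ (cyclePower n r hrn).incident v, ((ℓ e).val % n + 1)) : ℕ) : ZMod (Fintype.card (ZMod n)))
        = (((∑ e ∈ (cyclePower n r hrn).incident w, ((ℓ e).val % n + 1)) : ℕ) : ZMod (Fintype.card (ZMod n))) := by
      apply (ZMod.natCast_eq_natCast_iff _ _ _).mpr
      rw [hp]
      exact h4
    exact ((hAcast v).trans h5).trans (hAcast w).symm
  subst hvw
  -- then the copies agree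
  have h6 : n * (2 * (k * ∑ j : Fin r, j.val) + 2 * ∑ j : Fin r, π j t) ≡ n * (2 * (k * ∑ j : Fin r, j.val) + 2 * ∑ j : Fin r, π j s) [MOD n * k] :=
    Nat.ModEq.add_left_cancel' _ hmodN
  have h7 : (2 * (k * ∑ j : Fin r, j.val) + 2 * ∑ j : Fin r, π j t) ≡ (2 * (k * ∑ j : Fin r, j.val) + 2 * ∑ j : Fin r, π j s) [MOD k] := by
    rw [Nat.modEq_iff_dvd] at h6 ⊢
    obtain ⟨cc, hcc⟩ := h6
    refine ⟨cc, ?_⟩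
    have hn' : (n : ℤ) ≠ 0 := by exact_mod_cast hn.ne'
    apply mul_left_cancel₀ hn'
    push_cast at hcc ⊢
    linear_combination hcc
  have h8 : ((2 * ∑ j : Fin r, π j t : ℕ) : ZMod k) = ((2 * ∑ j : Fin r, π j s : ℕ) : ZMod k) :=
    (ZMod.natCast_eq_natCast_iff _ _ _).mpr (Nat.ModEq.add_left_cancel' _ h7)
  have h9 : ((∑ j : Fin r, π j t : ℕ) : ZMod k) = ((∑ j : Fin r, π j s : ℕ) : ZMod k) := by
    push_cast at h8 ⊢
    exact h2u.mul_right_injective h8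
  have h10 : (t.val : ZMod k) = (s.val : ZMod k) := by
    rw [← hB t, ← hB s]
    exact h9
  have hts : t = s := by
    apply Fin.ext
    calc t.val = ((t.val : ZMod k)).val := (ZMod.val_cast_of_lt t.isLt).symm
      _ = ((s.val : ZMod k)).val := by rw [h10]
      _ = s.val := ZMod.val_cast_of_lt s.isLt
  rw [hts]
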